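/- Let E be a finite-dimensional real vector space with a symmetric bilinear form ⟨·,·⟩. Let (x_k) be a sequence in E, let x, x₀, z ∈ E with ⟨z,x⟩ < 0 and ⟨z,x₀⟩ < 0, and suppose there are positive reals λ_k → 0 with λ_k x_k → z. Assume moreover ⟨x_k, x⟩ ≤ −1 and ⟨x_k, x₀⟩ ≤ −1 for all k. Then exp( arcosh(−⟨x_k,x⟩) − arcosh(−⟨x_k,x₀⟩) ) converges to ⟨z,x⟩/⟨z,x₀⟩ as k → ∞. -/
import Mathlib


open Filter

/-- The inverse hyperbolic cosine, arcosh(t) = log(t + √(t² - 1)). -/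
noncomputable def arcosh (t : ℝ) : ℝ := Real.log (t + Real.sqrt (t ^ 2 - 1))

lemma arcosh_arg_pos {t : ℝ} (ht : 1 ≤ t) : 0 < t + Real.sqrt (t ^ 2 - 1) :=
  lt_of_lt_of_le one_pos (le_add_of_le_of_nonneg ht (Real.sqrt_nonneg _))

lemma scaled_arg {t s : ℝ} (hs : 0 < s) :
    s * (t + Real.sqrt (t ^ 2 - 1)) = s * t + Real.sqrt ((s * t) ^ 2 - s ^ 2) := by
  have h1 : (s * t) ^ 2 - s ^ 2 = s ^ 2 * (t ^ 2 - 1) := by ring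
  rw [h1, Real.sqrt_mul (sq_nonneg s), Real.sqrt_sq hs.le, mul_add]

/-- Renormalized spacelike distance functions converge to the ratio defining
the space-horofunction: if λ_k x_k → z with λ_k → 0⁺ and ⟨z,x⟩, ⟨z,x₀⟩ < 0,
then exp(arcosh(-⟨x_k,x⟩) - arcosh(-⟨x_k,x₀⟩)) → ⟨z,x⟩/⟨z,x₀⟩. -/
theorem stmt_5 (E : Type*) [NormedAddCommGroup E] [NormedSpace ℝ E]
    [FiniteDimensional ℝ E]
    (B : E →ₗ[ℝ] E →ₗ[ℝ] ℝ) (hsymm : ∀ x y, B x y = B y x)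
    (x : ℕ → E) (x' x₀ z : E) (l : ℕ → ℝ)
    (hzx : B z x' < 0) (hzx₀ : B z x₀ < 0)
    (hl : ∀ k, 0 < l k) (hl0 : Tendsto l atTop (nhds 0))
    (hlx : Tendsto (fun k => l k • x k) atTop (nhds z))
    (hx : ∀ k, B (x k) x' ≤ -1) (hx₀ : ∀ k, B (x k) x₀ ≤ -1) :
    Tendsto (fun k => Real.exp (arcosh (-(B (x k) x')) - arcosh (-(B (x k) x₀))))
      atTop (nhds (B z x' / B z x₀)) := by
  set a : ℕ → ℝ := fun k => -(B (x k) x') with ha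
  set b : ℕ → ℝ := fun k => -(B (x k) x₀) with hb
  set c : ℝ := -(B z x') with hc
  set d : ℝ := -(B z x₀) with hd
  have hcpos : 0 < c := neg_pos.mpr hzx
  have hdpos : 0 < d := neg_pos.mpr hzx₀
  -- limits of l k * a k and l k * b k
  have tendB : ∀ (v : E), Tendsto (fun k => l k * B (x k) v) atTop (nhds (B z v)) := by
    intro v
    have hcont : Continuous fun w : E => B w v := (B.flip v).continuous_of_finiteDimensional
    have h1 : Tendsto (fun k => B (l k • x k) v) atTop (nhds (B z v)) :=
      (hcont.tendsto z).comp hlx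
    simpa [map_smul, smul_eq_mul] using h1
  have hA : Tendsto (fun k => l k * a k) atTop (nhds c) := by
    simpa [ha, hc, mul_neg] using (tendB x').neg
  have hB : Tendsto (fun k => l k * b k) atTop (nhds d) := by
    simpa [hb, hd, mul_neg] using (tendB x₀).neg
  -- limits of the scaled arguments
  have hga : Tendsto (fun k => l k * a k + Real.sqrt ((l k * a k) ^ 2 - (l k) ^ 2))
      atTop (nhds (2 * c)) := by
    have h1 : Tendsto (fun k => (l k * a k) ^ 2 - (l k) ^ 2) atTop (nhds (c ^ 2 - 0 ^ 2)) :=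
      (hA.pow 2).sub (hl0.pow 2)
    have h2 := (Real.continuous_sqrt.tendsto _).comp h1
    have h3 := hA.add h2
    have : Real.sqrt (c ^ 2 - 0 ^ 2) = c := by
      simpa using Real.sqrt_sq hcpos.le
    rw [this] at h3
    simpa [two_mul] using h3
  have hgb : Tendsto (fun k => l k * b k + Real.sqrt ((l k * b k) ^ 2 - (l k) ^ 2))
      atTop (nhds (2 * d)) := by
    have h1 : Tendsto (fun k => (l k * b k) ^ 2 - (l k) ^ 2) atTop (nhds (d ^ 2 - 0 ^ 2)) :=
      (hB.pow 2).sub (hl0.pow 2)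
    have h2 := (Real.continuous_sqrt.tendsto _).comp h1
    have h3 := hB.add h2
    have : Real.sqrt (d ^ 2 - 0 ^ 2) = d := by
      simpa using Real.sqrt_sq hdpos.le
    rw [this] at h3
    simpa [two_mul] using h3
  -- pointwise identity
  have key : ∀ k, Real.exp (arcosh (a k) - arcosh (b k)) =
      (l k * a k + Real.sqrt ((l k * a k) ^ 2 - (l k) ^ 2)) /
      (l k * b k + Real.sqrt ((l k * b k) ^ 2 - (l k) ^ 2)) := by
    intro k
    have hak : 1 ≤ a k := by simpa [ha] using neg_le_neg (hx k)
    have hbk : 1 ≤ b k := by simpa [hb] using neg_le_neg (hx₀ k)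
    have hAk := arcosh_arg_pos hak
    have hBk := arcosh_arg_pos hbk
    rw [arcosh, arcosh, Real.exp_sub, Real.exp_log hAk, Real.exp_log hBk,
      ← scaled_arg (hl k), ← scaled_arg (hl k),
      mul_div_mul_left _ _ (hl k).ne']
  -- conclude
  have hfin := hga.div hgb (by positivity)
  have hval : 2 * c / (2 * d) = B z x' / B z x₀ := by
    rw [mul_div_mul_left _ _ (two_ne_zero), hc, hd, neg_div_neg_eq]
  rw [← hval]
  exact hfin.congr fun k => (key k).symm
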